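/- Let S, T be nonisomorphic simple left R-modules over a k-algebra R (k algebraically closed) with End_R(S) ≅ End_R(T) ≅ k. If dim_k Ext^1_R(S,T) ≥ 2, then there exist two non-split extensions U, V of S by T such that U and V are non-isomorphic as R-modules. -/

import Mathlib

open CategoryTheory

variable (k R : Type) [Field k] [Ring R] [Algebra k R]

/-- For a `k`-algebra `R`, the category of `R`-modules is `k`-linear: scalars act on
hom-groups through the algebra map `k → R`, which is central. -/
noncomputable instance ModuleCat.algLinear : Linear k (ModuleCat.{0} R) where
  homModule M N :=
    letI : Module k N := Module.compHom N (algebraMap k R)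
    haveI : SMulCommClass R k N := ⟨fun r c n => by
      show r • (algebraMap k R c • n) = algebraMap k R c • r • n
      rw [smul_smul, smul_smul, Algebra.commutes]⟩
    ModuleCat.Hom.instModule
  smul_comp := by intros X Y Z c f g; ext x; exact map_smul g.hom (algebraMap k R c) _
  comp_smul := by intros; ext; rfl

/-- `Ext¹_R(M, N)`, as a `k`-vector space, for `R` a `k`-algebra. -/
noncomputable def ext1 (M N : ModuleCat.{0} R) : ModuleCat k :=
  ((Ext k (ModuleCat.{0} R) 1).obj (Opposite.op M)).obj N

variable {k R}

/-- `0 → T → E → S → 0` is a short exact sequence: `E` is an extension of `S` by `T`. -/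
def IsExtension {T E S : ModuleCat.{0} R} (ι : T ⟶ E) (π : E ⟶ S) : Prop :=
  Function.Injective ι ∧ Function.Surjective π ∧ LinearMap.range ι.hom = LinearMap.ker π.hom

/-- The extension `0 → T → E → S → 0` is split. -/
def IsSplit {T E S : ModuleCat.{0} R} (_ι : T ⟶ E) (π : E ⟶ S) : Prop :=
  ∃ σ : S ⟶ E, σ ≫ π = 𝟙 S

/-- Every endomorphism of `M` is a scalar: `End_R(M) ≅ k`. -/
def EndIsScalar (k : Type) [Field k] {R : Type} [Ring R] [Algebra k R]
    (M : ModuleCat.{0} R) : Prop :=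
  ∀ f : M ⟶ M, ∃ c : k, f = c • 𝟙 M

namespace Stmt4Aux


variable {k R : Type} [Field k] [Ring R] [Algebra k R]
variable {S T P0 P1 P2 : ModuleCat.{0} R}

/-- auxiliary map for the pushout construction -/
noncomputable def psi (d : P1 ⟶ P0) (f : P1 ⟶ T) : P1 →ₗ[R] (T × P0) :=
  LinearMap.prod f.hom (-d.hom)

@[simp] lemma psi_apply (d : P1 ⟶ P0) (f : P1 ⟶ T) (x : P1) :
    psi d f x = (f x, -(d x)) := rfl

/-- the middle module of the extension attached to a cocycle `f` -/
noncomputable def Emod (d : P1 ⟶ P0) (f : P1 ⟶ T) : ModuleCat.{0} R :=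
  ModuleCat.of R ((T × P0) ⧸ LinearMap.range (psi d f))

noncomputable def ιE (d : P1 ⟶ P0) (f : P1 ⟶ T) : T ⟶ Emod d f :=
  ModuleCat.ofHom ((LinearMap.range (psi d f)).mkQ.comp (LinearMap.inl R T P0))

noncomputable def ρE (d : P1 ⟶ P0) (f : P1 ⟶ T) : P0 ⟶ Emod d f :=
  ModuleCat.ofHom ((LinearMap.range (psi d f)).mkQ.comp (LinearMap.inr R T P0))

lemma ρE_d (d : P1 ⟶ P0) (f : P1 ⟶ T) (x : P1) :
    ρE d f (d x) = ιE d f (f x) := by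
  show Submodule.Quotient.mk _ = Submodule.Quotient.mk _
  rw [Submodule.Quotient.eq]
  exact ⟨-x, by simp [Prod.ext_iff]⟩

noncomputable def πE (d : P1 ⟶ P0) (π0 : P0 ⟶ S) (f : P1 ⟶ T)
    (hd : ∀ x, π0 (d x) = 0) : Emod d f ⟶ S :=
  ModuleCat.ofHom ((LinearMap.range (psi d f)).liftQ (π0.hom.comp (LinearMap.snd R T P0))
    (by rintro _ ⟨x, rfl⟩; simp [hd]))

lemma πE_ρE (d : P1 ⟶ P0) (π0 : P0 ⟶ S) (f : P1 ⟶ T) (hd : ∀ x, π0 (d x) = 0) (p : P0) :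
    πE d π0 f hd (ρE d f p) = π0 p := rfl

lemma πE_ιE (d : P1 ⟶ P0) (π0 : P0 ⟶ S) (f : P1 ⟶ T) (hd : ∀ x, π0 (d x) = 0) (t : T) :
    πE d π0 f hd (ιE d f t) = 0 := by
  show π0 0 = 0; simp

lemma ιE_injective (d : P1 ⟶ P0) (d2 : P2 ⟶ P1) (f : P1 ⟶ T)
    (hex : LinearMap.range d2.hom = LinearMap.ker d.hom) (hf : ∀ y, f (d2 y) = 0) :
    Function.Injective (ιE d f) := by
  rw [← LinearMap.ker_eq_bot]
  refine (Submodule.eq_bot_iff _).2 fun t ht => ?_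
  rw [LinearMap.mem_ker] at ht
  change Submodule.Quotient.mk _ = 0 at ht
  rw [Submodule.Quotient.mk_eq_zero] at ht
  obtain ⟨x, hx⟩ := ht
  have h1 : f x = t := congrArg Prod.fst hx
  have h2 : -d x = 0 := congrArg Prod.snd hx
  have : x ∈ LinearMap.ker d.hom := by simpa [LinearMap.mem_ker, neg_eq_zero] using h2
  rw [← hex] at this
  obtain ⟨y, rfl⟩ := this
  rw [← h1, hf]

lemma πE_surjective (d : P1 ⟶ P0) (π0 : P0 ⟶ S) (f : P1 ⟶ T)
    (hd : ∀ x, π0 (d x) = 0) (hπ0 : Function.Surjective π0) :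
    Function.Surjective (πE d π0 f hd) := by
  intro s
  obtain ⟨p, hp⟩ := hπ0 s
  exact ⟨ρE d f p, by rw [πE_ρE, hp]⟩

lemma range_ιE (d : P1 ⟶ P0) (π0 : P0 ⟶ S) (f : P1 ⟶ T)
    (hd : ∀ x, π0 (d x) = 0) (hex : LinearMap.range d.hom = LinearMap.ker π0.hom) :
    LinearMap.range (ιE d f).hom = LinearMap.ker (πE d π0 f hd).hom := by
  apply le_antisymm
  · rintro _ ⟨t, rfl⟩
    rw [LinearMap.mem_ker, πE_ιE]
  · rintro e he
    rw [LinearMap.mem_ker] at he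
    obtain ⟨⟨t, p⟩, rfl⟩ := Submodule.Quotient.mk_surjective _ e
    have hp : p ∈ LinearMap.ker π0.hom := he
    rw [← hex] at hp
    obtain ⟨x, hx⟩ := hp
    refine ⟨t + f x, ?_⟩
    show Submodule.Quotient.mk _ = Submodule.Quotient.mk _
    rw [Submodule.Quotient.eq]
    refine ⟨x, ?_⟩
    have h1 : psi d f x = (f x, -p) := by simp [hx]
    rw [h1]
    show _ = ((t + f x : T), (0:P0)) - (t,p)
    rw [Prod.mk_sub_mk, Prod.ext_iff]
    exact ⟨by simp, by simp⟩


/-- inverse of an injective map composed along a map landing in its range -/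
noncomputable def invComp {T E Q : ModuleCat.{0} R} (g : T ⟶ E) (hg : Function.Injective g)
    (m : Q ⟶ E) (hm : ∀ q, m q ∈ LinearMap.range g.hom) : Q ⟶ T :=
  ModuleCat.ofHom (((LinearEquiv.ofInjective g.hom hg).symm.toLinearMap).comp
    (LinearMap.codRestrict (LinearMap.range g.hom) m.hom hm))

lemma invComp_spec {T E Q : ModuleCat.{0} R} (g : T ⟶ E) (hg : Function.Injective g)
    (m : Q ⟶ E) (hm : ∀ q, m q ∈ LinearMap.range g.hom) (q : Q) :
    g (invComp g hg m hm q) = m q := by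
  have h := LinearEquiv.ofInjective_apply g.hom (h := hg) (invComp g hg m hm q)
  rw [← h]
  show (((LinearEquiv.ofInjective g.hom hg)
    ((LinearEquiv.ofInjective g.hom hg).symm _)) : E) = m q
  rw [LinearEquiv.apply_symm_apply]
  rfl

lemma coboundary_of_split (d : P1 ⟶ P0) (π0 : P0 ⟶ S) (f : P1 ⟶ T)
    (hd : ∀ x, π0 (d x) = 0) (hι : Function.Injective (ιE d f))
    (hrange : LinearMap.range (ιE d f).hom = LinearMap.ker (πE d π0 f hd).hom)
    (σ : S ⟶ Emod d f) (hσ : σ ≫ πE d π0 f hd = 𝟙 S) :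
    ∃ g : P0 ⟶ T, ∀ x, f x = g (d x) := by
  set π := πE d π0 f hd with hπ
  have hσπ : ∀ u : Emod d f, π (σ (π u)) = π u := fun u => ConcreteCategory.congr_hom hσ (π u)
  set m : Emod d f ⟶ Emod d f := 𝟙 (Emod d f) - π ≫ σ with hmdef
  have hm : ∀ u, m u ∈ LinearMap.range (ιE d f).hom := by
    intro u
    rw [hrange, LinearMap.mem_ker]
    show π (u - σ (π u)) = 0
    rw [map_sub, hσπ, sub_self]
  refine ⟨invComp (ιE d f) hι ((ρE d f) ≫ m) (fun p => hm _), fun x => hι ?_⟩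
  rw [invComp_spec]
  show ιE d f (f x) = m (ρE d f (d x))
  have h2 : m (ρE d f (d x)) = ρE d f (d x) - σ (π (ρE d f (d x))) := rfl
  rw [h2, hπ, πE_ρE, hd, map_zero, sub_zero, ρE_d]

lemma smul_hom_apply (c : k) {M N : ModuleCat.{0} R} (h : M ⟶ N) (x : M) :
    (c • h) x = algebraMap k R c • h x := rfl

lemma endIsScalar_apply {M : ModuleCat.{0} R} (hM : EndIsScalar k M) (a : M ⟶ M) :
    ∃ c : k, ∀ x, a x = algebraMap k R c • x := by
  obtain ⟨c, hc⟩ := hM a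
  exact ⟨c, fun x => by rw [hc]; rfl⟩

lemma classes_proportional
    [IsSimpleModule R S] [IsSimpleModule R T] (hST : IsEmpty (S ≃ₗ[R] T))
    (hS : EndIsScalar k S) (hT : EndIsScalar k T)
    (d : P1 ⟶ P0) (π0 : P0 ⟶ S)
    (hd : ∀ x, π0 (d x) = 0) (hπ0 : Function.Surjective π0)
    (hex1 : LinearMap.range d.hom = LinearMap.ker π0.hom)
    (f g : P1 ⟶ T)
    (hιf : Function.Injective (ιE d f)) (hιg : Function.Injective (ιE d g))
    (φ : Emod d f ≃ₗ[R] Emod d g) :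
    ∃ α β : k, β ≠ 0 ∧ ∃ h : P0 ⟶ T,
      ∀ x, algebraMap k R β • g x - algebraMap k R α • f x = h (d x) := by
  set ιf := ιE d f
  set ιg := ιE d g
  set πf := πE d π0 f hd with hπfdef
  set πg := πE d π0 g hd with hπgdef
  have rangef := range_ιE d π0 f hd hex1
  have rangeg := range_ιE d π0 g hd hex1
  have hπfs : Function.Surjective πf := πE_surjective d π0 f hd hπ0
  have hπgs : Function.Surjective πg := πE_surjective d π0 g hd hπ0
  set φhom : Emod d f ⟶ Emod d g := ModuleCat.ofHom (φ : Emod d f →ₗ[R] Emod d g) with hφhom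
  -- step 1 : `πg ∘ φ ∘ ιf = 0`
  set w : T ⟶ S := ιf ≫ φhom ≫ πg with hw
  have hw0 : w = 0 := by
    rcases LinearMap.bijective_or_eq_zero w.hom with hbij | h0
    · exact ((hST.false ((LinearEquiv.ofBijective w.hom hbij).symm)).elim)
    · exact ModuleCat.hom_ext h0
  have hφι : ∀ t, φ (ιf t) ∈ LinearMap.range ιg.hom := by
    intro t
    rw [rangeg, LinearMap.mem_ker]
    exact ConcreteCategory.congr_hom hw0 t
  -- step 2 : the induced endomorphism of `T`
  set a : T ⟶ T := invComp ιg hιg (ιf ≫ φhom) hφι with ha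
  have haspec : ∀ t, ιg (a t) = φ (ιf t) := fun t => invComp_spec ιg hιg (ιf ≫ φhom) hφι t
  obtain ⟨α, hα⟩ := endIsScalar_apply hT a
  -- step 3 : the induced endomorphism of `S`
  have hle : LinearMap.ker πf.hom ≤
      LinearMap.ker (πg.hom.comp (φ : Emod d f →ₗ[R] Emod d g)) := by
    intro u hu
    rw [← rangef] at hu
    obtain ⟨t, rfl⟩ := hu
    rw [LinearMap.mem_ker]
    exact ConcreteCategory.congr_hom hw0 t
  set q := πf.hom.quotKerEquivOfSurjective hπfs with hq
  set b : S ⟶ S :=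
    ModuleCat.ofHom (((LinearMap.ker πf.hom).liftQ
      (πg.hom.comp (φ : Emod d f →ₗ[R] Emod d g)) hle).comp
      q.symm.toLinearMap) with hb
  have hqmk : ∀ u : Emod d f, q (Submodule.Quotient.mk u) = πf u := fun u => rfl
  have hbspec : ∀ u : Emod d f, b (πf u) = πg (φ u) := by
    intro u
    have h1 : q.symm (πf u) = Submodule.Quotient.mk u := by
      rw [LinearEquiv.symm_apply_eq, hqmk]
    show _ = _
    rw [hb]
    show ((LinearMap.ker πf.hom).liftQ
      (πg.hom.comp (φ : Emod d f →ₗ[R] Emod d g)) hle) (q.symm (πf u)) = _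
    rw [h1, Submodule.liftQ_apply]
    rfl
  obtain ⟨β, hβ⟩ := endIsScalar_apply hS b
  have hbs : Function.Surjective b := by
    intro s
    obtain ⟨v, rfl⟩ := hπgs s
    obtain ⟨u, rfl⟩ := φ.surjective v
    exact ⟨πf u, hbspec u⟩
  have hβ0 : β ≠ 0 := by
    intro h0
    have : Nontrivial S := IsSimpleModule.nontrivial R S
    obtain ⟨s1, s2, hs⟩ := this
    apply hs
    obtain ⟨u1, hu1⟩ := hbs s1
    obtain ⟨u2, hu2⟩ := hbs s2
    rw [← hu1, ← hu2, hβ, hβ, h0, map_zero, zero_smul, zero_smul]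
  -- step 4 : the map `μ` and the corestriction `h`
  set μ : P0 ⟶ Emod d g := ((β • 𝟙 P0) ≫ ρE d g) - (ρE d f ≫ φhom) with hμdef
  have hμ : ∀ p, μ p ∈ LinearMap.range ιg.hom := by
    intro p
    rw [rangeg, LinearMap.mem_ker]
    have h1 : μ p = ρE d g (algebraMap k R β • p) - φ (ρE d f p) := rfl
    rw [h1, map_sub]
    have h2 : πg (φ (ρE d f p)) = b (πf (ρE d f p)) := (hbspec _).symm
    rw [h2, hπfdef, πE_ρE, hβ, map_smul, πE_ρE, sub_self]
  set h : P0 ⟶ T := invComp ιg hιg μ hμ with hh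
  have hhspec : ∀ p, ιg (h p) = μ p := fun p => invComp_spec ιg hιg μ hμ p
  refine ⟨α, β, hβ0, h, fun x => hιg ?_⟩
  rw [hhspec]
  have h1 : μ (d x) = ρE d g (algebraMap k R β • d x) - φ (ρE d f (d x)) := rfl
  have h2 : ρE d g (algebraMap k R β • d x) = ιg (algebraMap k R β • g x) := by
    rw [← map_smul (ConcreteCategory.hom d), ρE_d, map_smul]
  have h3 : φ (ρE d f (d x)) = ιg (algebraMap k R α • f x) := by
    rw [ρE_d, ← haspec, hα]
  rw [map_sub, h1, h2, h3]

end Stmt4Aux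

theorem stmt4 (k R : Type) [Field k] [IsAlgClosed k] [Ring R] [Algebra k R]
    (S T : ModuleCat.{0} R) [IsSimpleModule R S] [IsSimpleModule R T]
    (hST : IsEmpty (S ≃ₗ[R] T))
    (hS : EndIsScalar k S) (hT : EndIsScalar k T)
    (hdim : 2 ≤ Module.finrank k (ext1 k R S T)) :
    ∃ (U V : ModuleCat.{0} R) (ιU : T ⟶ U) (πU : U ⟶ S) (ιV : T ⟶ V) (πV : V ⟶ S),
      IsExtension ιU πU ∧ IsExtension ιV πV ∧
      ¬ IsSplit ιU πU ∧ ¬ IsSplit ιV πV ∧ IsEmpty (U ≃ₗ[R] V) := by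
  classical
  obtain ⟨P⟩ : Nonempty (ProjectiveResolution S) := HasProjectiveResolution.out
  set C := P.complex.linearYonedaObj k T with hC
  have hprev : (ComplexShape.up ℕ).prev 1 = 0 := CochainComplex.prev_nat_succ 0
  have hnext : (ComplexShape.up ℕ).next 1 = 2 := by simp [CochainComplex.next]
  set SC := C.sc' 0 1 2 with hSC
  have e : ext1 k R S T ≃ₗ[k] SC.moduleCatLeftHomologyData.H :=
    ((P.isoExt 1 T) ≪≫ C.homologyIsoSc' 0 1 2 hprev hnext ≪≫
      SC.moduleCatHomologyIso).toLinearEquiv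
  have hdim2 : 2 ≤ Module.finrank k SC.moduleCatLeftHomologyData.H := hdim.trans_eq e.finrank_eq
  -- extract two independent homology classes
  have hrank : ¬ (Module.rank k SC.moduleCatLeftHomologyData.H ≤ 1) := by
    intro hr
    have h1 := Cardinal.toNat_le_toNat hr Cardinal.one_lt_aleph0
    simp only [map_one] at h1
    have : Module.finrank k SC.moduleCatLeftHomologyData.H ≤ 1 := h1
    omega
  rw [rank_le_one_iff] at hrank
  push_neg at hrank
  obtain ⟨x, hx⟩ := hrank 0
  have hx0 : x ≠ 0 := fun h => hx 0 (by rw [h, smul_zero])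
  obtain ⟨y, hy⟩ := hrank x
  obtain ⟨fx, hfx⟩ := Submodule.Quotient.mk_surjective _ x
  obtain ⟨fy, hfy⟩ := Submodule.Quotient.mk_surjective _ y
  -- concrete data
  set d : P.complex.X 1 ⟶ P.complex.X 0 := P.complex.d 1 0 with hdd
  set d2 : P.complex.X 2 ⟶ P.complex.X 1 := P.complex.d 2 1 with hd2
  set π0 : P.complex.X 0 ⟶ S := P.π.f 0 with hπ0def
  have hd : ∀ z, π0 (d z) = 0 := fun z => ConcreteCategory.congr_hom P.complex_d_comp_π_f_zero z
  have hπ0 : Function.Surjective π0 := by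
    rw [← ModuleCat.epi_iff_surjective]; exact (inferInstance : Epi (P.π.f 0))
  have hex1 : LinearMap.range d.hom = LinearMap.ker π0.hom :=
    (P.exact₀).moduleCat_range_eq_ker
  have hex2 : LinearMap.range d2.hom = LinearMap.ker d.hom :=
    (P.exact_succ 0).moduleCat_range_eq_ker
  -- the lifted cocycles
  set f : P.complex.X 1 ⟶ T := fx.1 with hfdef
  set g : P.complex.X 1 ⟶ T := fy.1 with hgdef
  have hf : ∀ z, f (d2 z) = 0 := by
    intro z
    have h1 : (d2 ≫ f : P.complex.X 2 ⟶ T) = 0 := fx.2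
    exact ConcreteCategory.congr_hom h1 z
  have hg : ∀ z, g (d2 z) = 0 := by
    intro z
    have h1 : (d2 ≫ g : P.complex.X 2 ⟶ T) = 0 := fy.2
    exact ConcreteCategory.congr_hom h1 z
  -- coboundary criterion
  have hcb : ∀ (v : P.complex.X 1 ⟶ T) (hv : SC.g.hom v = 0) (h : P.complex.X 0 ⟶ T),
      v = d ≫ h →
      Submodule.Quotient.mk (p := LinearMap.range SC.moduleCatToCycles)
        (⟨v, hv⟩ : ↥(LinearMap.ker SC.g.hom)) = 0 := by
    intro v hv h hu
    rw [Submodule.Quotient.mk_eq_zero]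
    exact ⟨h, Subtype.ext (show (d ≫ h : P.complex.X 1 ⟶ T) = v from hu.symm)⟩
  -- injectivity of the ι's
  have hιf : Function.Injective (Stmt4Aux.ιE d f) := Stmt4Aux.ιE_injective d d2 f hex2 hf
  have hιg : Function.Injective (Stmt4Aux.ιE d g) := Stmt4Aux.ιE_injective d d2 g hex2 hg
  refine ⟨Stmt4Aux.Emod d f, Stmt4Aux.Emod d g, Stmt4Aux.ιE d f, Stmt4Aux.πE d π0 f hd,
    Stmt4Aux.ιE d g, Stmt4Aux.πE d π0 g hd,
    ⟨hιf, Stmt4Aux.πE_surjective d π0 f hd hπ0, Stmt4Aux.range_ιE d π0 f hd hex1⟩,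
    ⟨hιg, Stmt4Aux.πE_surjective d π0 g hd hπ0, Stmt4Aux.range_ιE d π0 g hd hex1⟩,
    ?_, ?_, ?_⟩
  · rintro ⟨σ, hσ⟩
    obtain ⟨h, hh⟩ := Stmt4Aux.coboundary_of_split d π0 f hd hιf
      (Stmt4Aux.range_ιE d π0 f hd hex1) σ hσ
    exact hx0 (by rw [← hfx]; exact hcb f fx.2 h (ModuleCat.hom_ext (LinearMap.ext fun z => hh z)))
  · rintro ⟨σ, hσ⟩
    obtain ⟨h, hh⟩ := Stmt4Aux.coboundary_of_split d π0 g hd hιg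
      (Stmt4Aux.range_ιE d π0 g hd hex1) σ hσ
    have hy0 : y ≠ 0 := fun h0 => hy 0 (by rw [h0, zero_smul])
    exact hy0 (by rw [← hfy]; exact hcb g fy.2 h (ModuleCat.hom_ext (LinearMap.ext fun z => hh z)))
  · constructor
    intro φ
    obtain ⟨α, β, hβ0, h, hrel⟩ := Stmt4Aux.classes_proportional hST hS hT d π0 hd hπ0 hex1
      f g hιf hιg φ
    -- derive `β • y - α • x = 0` in the homology module
    have key : β • y - α • x = 0 := by
      rw [← hfx, ← hfy]
      refine (?_ : (β • Submodule.Quotient.mk fy - α • Submodule.Quotient.mk fx :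
        ↥(LinearMap.ker SC.g.hom) ⧸ LinearMap.range SC.moduleCatToCycles) = 0)
      rw [← Submodule.Quotient.mk_smul, ← Submodule.Quotient.mk_smul,
        ← Submodule.Quotient.mk_sub]
      have hv : SC.g.hom (β • g - α • f : P.complex.X 1 ⟶ T) = 0 := by
        refine (map_sub SC.g.hom (β • @id SC.X₂ g) (α • @id SC.X₂ f)).trans ?_
        rw [map_smul, map_smul]
        have h1 : SC.g.hom (@id SC.X₂ f) = 0 := fx.2
        have h2 : SC.g.hom (@id SC.X₂ g) = 0 := fy.2
        rw [h1, h2, smul_zero, smul_zero, sub_zero]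
      have heq : (β • g - α • f : P.complex.X 1 ⟶ T) = d ≫ h := by
        apply ModuleCat.hom_ext
        apply LinearMap.ext
        intro z
        have h1 : (β • g - α • f : P.complex.X 1 ⟶ T) z
            = algebraMap k R β • g z - algebraMap k R α • f z := rfl
        rw [h1, hrel z]
        rfl
      exact hcb (β • g - α • f) hv h heq
    apply hy (β⁻¹ * α)
    have h2 : β • y = α • x := by
      have := sub_eq_zero.mp key
      exact this
    calc (β⁻¹ * α) • x = β⁻¹ • (α • x) := by rw [mul_smul]
    _ = β⁻¹ • (β • y) := by rw [h2]
    _ = y := by rw [smul_smul, inv_mul_cancel₀ hβ0, one_smul]
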